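/- Let q be a prime power and let g₁, g₂ be generators of the multiplicative group F_q^*. Then the set A = {(x, y) ∈ Z_{q−1} × Z_{q−1} : g₁^x + g₂^y = 1 in F_q} is a Sidon set in the additive group Z_{q−1} × Z_{q−1}. -/

import Mathlib

/-- Let `q` be a prime power and `g₁, g₂` generators of `F_q^*`. Then
`A = {(x,y) ∈ Z_{q−1} × Z_{q−1} : g₁^x + g₂^y = 1}` is a Sidon set in
`Z_{q−1} × Z_{q−1}`. -/
theorem sidon_fermat_graph {F : Type*} [Field F] [Fintype F] {q : ℕ}
    (hq : Fintype.card F = q)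
    (g₁ g₂ : Fˣ)
    (hg₁ : ∀ u : Fˣ, u ∈ Subgroup.zpowers g₁)
    (hg₂ : ∀ u : Fˣ, u ∈ Subgroup.zpowers g₂)
    (A : Set (ZMod (q - 1) × ZMod (q - 1)))
    (hAdef : A = {p : ZMod (q - 1) × ZMod (q - 1) |
      ((g₁ ^ p.1.val : Fˣ) : F) + ((g₂ ^ p.2.val : Fˣ) : F) = 1}) :
    ∀ a ∈ A, ∀ b ∈ A, ∀ c ∈ A, ∀ d ∈ A,
      a - b = c - d → a - b ≠ 0 → a = c ∧ b = d := by
  classical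
  subst hAdef
  have hq1 : q - 1 ≠ 0 := by
    have h2 : 1 < Fintype.card F := Fintype.one_lt_card
    omega
  haveI : NeZero (q - 1) := ⟨hq1⟩
  have hcard : Fintype.card Fˣ = q - 1 := by rw [Fintype.card_units, hq]
  have ho₁ : orderOf g₁ = q - 1 := by
    rw [orderOf_eq_card_of_forall_mem_zpowers hg₁, Nat.card_eq_fintype_card, hcard]
  have ho₂ : orderOf g₂ = q - 1 := by
    rw [orderOf_eq_card_of_forall_mem_zpowers hg₂, Nat.card_eq_fintype_card, hcard]
  have key : ∀ (g : Fˣ), orderOf g = q - 1 →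
      ∀ x y : ZMod (q - 1), g ^ x.val = g ^ y.val ↔ x = y := by
    intro g hg x y
    rw [pow_eq_pow_iff_modEq, hg]
    constructor
    · intro h
      have h2 := (ZMod.natCast_eq_natCast_iff _ _ _).mpr h
      rwa [ZMod.natCast_val, ZMod.natCast_val, ZMod.cast_id, ZMod.cast_id] at h2
    · rintro rfl; rfl
  have hom : ∀ (g : Fˣ), orderOf g = q - 1 →
      ∀ x y : ZMod (q - 1), g ^ (x + y).val = g ^ x.val * g ^ y.val := by
    intro g hg x y
    rw [← pow_add, pow_eq_pow_iff_modEq, hg, ZMod.val_add]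
    exact Nat.mod_modEq _ _
  intro a ha b hb c hc d hd hsub hne
  set s : ZMod (q - 1) := a.1 - b.1 with hs
  set t : ZMod (q - 1) := a.2 - b.2 with ht
  have hs' : c.1 - d.1 = s := congrArg Prod.fst hsub.symm
  have ht' : c.2 - d.2 = t := congrArg Prod.snd hsub.symm
  have ha1 : a.1 = s + b.1 := by rw [hs]; ring
  have ha2 : a.2 = t + b.2 := by rw [ht]; ring
  have hc1 : c.1 = s + d.1 := by rw [← hs']; ring
  have hc2 : c.2 = t + d.2 := by rw [← ht']; ring
  set u : Fˣ := g₁ ^ s.val with hu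
  set v : Fˣ := g₂ ^ t.val with hv
  have ha' : (u : F) * ((g₁ ^ b.1.val : Fˣ) : F) + (v : F) * ((g₂ ^ b.2.val : Fˣ) : F) = 1 := by
    have h := ha
    simp only [Set.mem_setOf_eq, ha1, ha2, hom g₁ ho₁, hom g₂ ho₂] at h
    simpa [hu, hv] using h
  have hc' : (u : F) * ((g₁ ^ d.1.val : Fˣ) : F) + (v : F) * ((g₂ ^ d.2.val : Fˣ) : F) = 1 := by
    have h := hc
    simp only [Set.mem_setOf_eq, hc1, hc2, hom g₁ ho₁, hom g₂ ho₂] at h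
    simpa [hu, hv] using h
  have hb' : ((g₁ ^ b.1.val : Fˣ) : F) + ((g₂ ^ b.2.val : Fˣ) : F) = 1 := hb
  have hd' : ((g₁ ^ d.1.val : Fˣ) : F) + ((g₂ ^ d.2.val : Fˣ) : F) = 1 := hd
  set X : F := ((g₁ ^ b.1.val : Fˣ) : F)
  set X' : F := ((g₁ ^ d.1.val : Fˣ) : F)
  have hXb : ((u : F) - v) * X = 1 - v := by
    have hY : ((g₂ ^ b.2.val : Fˣ) : F) = 1 - X := by linear_combination hb'
    rw [hY] at ha'
    linear_combination ha'
  have hXd : ((u : F) - v) * X' = 1 - v := by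
    have hY : ((g₂ ^ d.2.val : Fˣ) : F) = 1 - X' := by linear_combination hd'
    rw [hY] at hc'
    linear_combination hc'
  by_cases huv : (u : F) = v
  · exfalso
    have hv1 : (v : F) = 1 := by
      have h0 : ((u : F) - v) * X = 0 := by rw [huv]; ring
      rw [h0] at hXb
      linear_combination hXb
    have hu1 : (u : F) = 1 := by rw [huv, hv1]
    have hs0 : s = 0 := by
      have hu' : u = 1 := Units.ext (by simpa using hu1)
      have : g₁ ^ s.val = g₁ ^ (0 : ZMod (q - 1)).val := by
        rw [← hu, hu']
        simp [ZMod.val_zero]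
      exact (key g₁ ho₁ s 0).mp this
    have ht0 : t = 0 := by
      have hv' : v = 1 := Units.ext (by simpa using hv1)
      have : g₂ ^ t.val = g₂ ^ (0 : ZMod (q - 1)).val := by
        rw [← hv, hv']
        simp [ZMod.val_zero]
      exact (key g₂ ho₂ t 0).mp this
    apply hne
    have hab : a - b = (s, t) := rfl
    rw [hab, hs0, ht0]
    rfl
  · have hXX : X = X' := by
      have hne0 : (u : F) - v ≠ 0 := sub_ne_zero.mpr huv
      exact mul_left_cancel₀ hne0 (hXb.trans hXd.symm)
    have hb1d1 : b.1 = d.1 := (key g₁ ho₁ _ _).mp (Units.ext hXX)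
    have hYY : ((g₂ ^ b.2.val : Fˣ) : F) = ((g₂ ^ d.2.val : Fˣ) : F) := by
      linear_combination hb' - hd' - hXX
    have hb2d2 : b.2 = d.2 := (key g₂ ho₂ _ _).mp (Units.ext hYY)
    have hbd : b = d := Prod.ext hb1d1 hb2d2
    refine ⟨?_, hbd⟩
    rw [hbd] at hsub
    exact sub_left_inj.mp hsub
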